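/- Sample-budget bound via structural SNRs: assume W = V_K^H H^H H V_K is positive definite and let η > 0. Then every subset S ⊆ {1,…,n} with MSE(S) ≤ η satisfies L_{|S|} ≥ ( k² − η·trace(Λ^{-1} W^{-1}) ) / η, where L_t = max over subsets X ⊆ {1,…,n} with |X| = t of Σ_{j∈X} ℓ_j and ℓ_i = λ_{w,i}^{-1} v_i^H W^{-1} v_i. -/

import Mathlib

open Matrix Finset ComplexOrder

/-- The matrix `M(S) = Λ⁻¹ + ∑_{i ∈ S} λ_{w,i}⁻¹ v_i v_iᴴ`. -/
noncomputable def Mmat {n k : ℕ} (lam : Fin k → ℝ) (lw : Fin n → ℝ)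
    (v : Fin n → Fin k → ℂ) (S : Finset (Fin n)) : Matrix (Fin k) (Fin k) ℂ :=
  (Matrix.diagonal fun j => (lam j : ℂ))⁻¹ +
    ∑ i ∈ S, ((lw i : ℂ))⁻¹ • Matrix.vecMulVec (v i) (star (v i))

/-- The matrix `V_K` whose `i`-th row is `v_iᴴ`. -/
noncomputable def VKmat {n k : ℕ} (v : Fin n → Fin k → ℂ) : Matrix (Fin n) (Fin k) ℂ :=
  Matrix.of fun i j => star (v i j)

/-- The optimal interpolation error covariance `K*(S) = H V_K M(S)⁻¹ V_Kᴴ Hᴴ`. -/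
noncomputable def Kstar {n k m : ℕ} (lam : Fin k → ℝ) (lw : Fin n → ℝ)
    (v : Fin n → Fin k → ℂ) (H : Matrix (Fin m) (Fin n) ℂ) (S : Finset (Fin n)) :
    Matrix (Fin m) (Fin m) ℂ :=
  H * VKmat v * (Mmat lam lw v S)⁻¹ * (VKmat v)ᴴ * Hᴴ

/-- The interpolation mean-square error `MSE(S) = trace K*(S)`, a (nonnegative) real. -/
noncomputable def MSE {n k m : ℕ} (lam : Fin k → ℝ) (lw : Fin n → ℝ)
    (v : Fin n → Fin k → ℂ) (H : Matrix (Fin m) (Fin n) ℂ) (S : Finset (Fin n)) : ℝ :=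
  ((Kstar lam lw v H S).trace).re


private lemma trace_conjTranspose_mul_eq_sum {k : ℕ} (X Y : Matrix (Fin k) (Fin k) ℂ) :
    (Xᴴ * Y).trace = ∑ p : Fin k × Fin k, (starRingEnd ℂ) (X p.1 p.2) * Y p.1 p.2 := by
  rw [Matrix.trace, Fintype.sum_prod_type]
  rw [Finset.sum_comm]
  simp [Matrix.diag, Matrix.mul_apply, Matrix.conjTranspose_apply]

private lemma trace_conjTranspose_mul_self_re {k : ℕ} (X : Matrix (Fin k) (Fin k) ℂ) :
    ((Xᴴ * X).trace).re = ∑ p : Fin k × Fin k, ‖X p.1 p.2‖ ^ 2 := by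
  rw [trace_conjTranspose_mul_eq_sum, Complex.re_sum]
  refine Finset.sum_congr rfl fun p _ => ?_
  simp [Complex.mul_re, Complex.sq_norm, Complex.normSq_apply]

private lemma matrix_cauchy_schwarz {k : ℕ} (X Y : Matrix (Fin k) (Fin k) ℂ) :
    (((Xᴴ * Y).trace).re) ^ 2 ≤ ((Xᴴ * X).trace).re * ((Yᴴ * Y).trace).re := by
  have hb : |((Xᴴ * Y).trace).re| ≤
      ∑ p : Fin k × Fin k, ‖X p.1 p.2‖ * ‖Y p.1 p.2‖ := by
    rw [trace_conjTranspose_mul_eq_sum, Complex.re_sum]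
    refine (Finset.abs_sum_le_sum_abs _ _).trans (Finset.sum_le_sum fun p _ => ?_)
    calc |((starRingEnd ℂ) (X p.1 p.2) * Y p.1 p.2).re|
        ≤ ‖(starRingEnd ℂ) (X p.1 p.2) * Y p.1 p.2‖ := Complex.abs_re_le_norm _
      _ = ‖X p.1 p.2‖ * ‖Y p.1 p.2‖ := by rw [norm_mul, RCLike.norm_conj]
  have hcs := Finset.sum_mul_sq_le_sq_mul_sq Finset.univ
    (fun p : Fin k × Fin k => ‖X p.1 p.2‖) (fun p => ‖Y p.1 p.2‖)
  rw [trace_conjTranspose_mul_self_re, trace_conjTranspose_mul_self_re]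
  calc (((Xᴴ * Y).trace).re) ^ 2 = |((Xᴴ * Y).trace).re| ^ 2 := (sq_abs _).symm
    _ ≤ (∑ p : Fin k × Fin k, ‖X p.1 p.2‖ * ‖Y p.1 p.2‖) ^ 2 := by
        apply pow_le_pow_left₀ (abs_nonneg _) hb
    _ ≤ _ := hcs

open scoped MatrixOrder in
private lemma key_ineq {k : ℕ} {A B : Matrix (Fin k) (Fin k) ℂ}
    (hA : A.PosDef) (hB : B.PosDef) :
    (k : ℝ) ^ 2 ≤ ((A⁻¹ * B).trace).re * ((A * B⁻¹).trace).re
      ∧ 0 ≤ ((A * B⁻¹).trace).re := by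
  set P := CFC.sqrt A with hP
  set Q := CFC.sqrt B with hQ
  have hPP : P * P = A := CFC.sqrt_mul_sqrt_self A hA.posSemidef.nonneg
  have hQQ : Q * Q = B := CFC.sqrt_mul_sqrt_self B hB.posSemidef.nonneg
  have hPH : Pᴴ = P := (CFC.sqrt_nonneg A).posSemidef.1
  have hQH : Qᴴ = Q := (CFC.sqrt_nonneg B).posSemidef.1
  have hPdet : IsUnit P.det := by
    have h1 : P.det * P.det = A.det := by rw [← Matrix.det_mul, hPP]
    have h2 : P.det * P.det ≠ 0 := by rw [h1]; exact hA.det_pos.ne'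
    exact (left_ne_zero_of_mul h2).isUnit
  have hQdet : IsUnit Q.det := by
    have h1 : Q.det * Q.det = B.det := by rw [← Matrix.det_mul, hQQ]
    have h2 : Q.det * Q.det ≠ 0 := by rw [h1]; exact hB.det_pos.ne'
    exact (left_ne_zero_of_mul h2).isUnit
  have hPl : P⁻¹ * P = 1 := Matrix.nonsing_inv_mul P hPdet
  have hQr : Q * Q⁻¹ = 1 := Matrix.mul_nonsing_inv Q hQdet
  have hPiH : (P⁻¹)ᴴ = P⁻¹ := Matrix.IsHermitian.inv hPH
  have hQiH : (Q⁻¹)ᴴ = Q⁻¹ := Matrix.IsHermitian.inv hQH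
  have hAinv : A⁻¹ = P⁻¹ * P⁻¹ := by rw [← hPP, Matrix.mul_inv_rev]
  have hBinv : B⁻¹ = Q⁻¹ * Q⁻¹ := by rw [← hQQ, Matrix.mul_inv_rev]
  set X := P⁻¹ * Q with hXdef
  set Y := P * Q⁻¹ with hYdef
  have hXH : Xᴴ = Q * P⁻¹ := by rw [hXdef, Matrix.conjTranspose_mul, hQH, hPiH]
  have hYH : Yᴴ = Q⁻¹ * P := by rw [hYdef, Matrix.conjTranspose_mul, hQiH, hPH]
  have hXY : Xᴴ * Y = 1 := by
    rw [hXH, hYdef]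
    calc Q * P⁻¹ * (P * Q⁻¹) = Q * (P⁻¹ * P) * Q⁻¹ := by simp only [Matrix.mul_assoc]
      _ = 1 := by rw [hPl, Matrix.mul_one, hQr]
  have htr1 : ((Xᴴ * Y).trace).re = (k : ℝ) := by
    rw [hXY, Matrix.trace_one]; simp
  have hXX : ((Xᴴ * X).trace).re = ((A⁻¹ * B).trace).re := by
    have h : Xᴴ * X = Q * (A⁻¹ * Q) := by
      rw [hXH, hXdef, hAinv]
      simp only [Matrix.mul_assoc]
    rw [h, Matrix.trace_mul_comm, Matrix.mul_assoc, ← hQQ, ← Matrix.mul_assoc]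
  have hYY : ((Yᴴ * Y).trace).re = ((A * B⁻¹).trace).re := by
    have h : Yᴴ * Y = Q⁻¹ * (A * Q⁻¹) := by
      rw [hYH, hYdef, ← hPP]
      simp only [Matrix.mul_assoc]
    rw [h, Matrix.trace_mul_comm, Matrix.mul_assoc, hBinv, ← Matrix.mul_assoc]
  have hcs := matrix_cauchy_schwarz X Y
  rw [htr1, hXX, hYY] at hcs
  have hnn : 0 ≤ ((Yᴴ * Y).trace).re := by
    rw [trace_conjTranspose_mul_self_re]; positivity
  rw [hYY] at hnn
  exact ⟨hcs, hnn⟩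


private lemma diag_inv_eq {k : ℕ} (lam : Fin k → ℝ) (hlam : ∀ j, 0 < lam j) :
    (Matrix.diagonal fun j => (lam j : ℂ))⁻¹
      = Matrix.diagonal fun j => (((lam j)⁻¹ : ℝ) : ℂ) := by
  apply Matrix.inv_eq_right_inv
  rw [Matrix.diagonal_mul_diagonal]
  have h : (fun j => (lam j : ℂ) * (((lam j)⁻¹ : ℝ) : ℂ)) = fun _ => (1 : ℂ) := by
    funext j
    have h0 : (lam j : ℂ) ≠ 0 := by exact_mod_cast (hlam j).ne'
    push_cast
    field_simp
  rw [h, Matrix.diagonal_one]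

private lemma posSemidef_vecMulVec_star {k : ℕ} (a : Fin k → ℂ) :
    (Matrix.vecMulVec a (star a)).PosSemidef := by
  rw [Matrix.vecMulVec_eq (Fin 1), ← Matrix.conjTranspose_replicateCol]
  exact Matrix.posSemidef_self_mul_conjTranspose _

private lemma posSemidef_real_smul {k : ℕ} {A : Matrix (Fin k) (Fin k) ℂ}
    (hA : A.PosSemidef) {r : ℝ} (hr : 0 ≤ r) : ((r : ℂ) • A).PosSemidef := by
  refine ⟨?_, fun x => ?_⟩
  · rw [Matrix.IsHermitian, Matrix.conjTranspose_smul, hA.1]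
    simp [Complex.conj_ofReal]
  · exact (hA.smul (Complex.zero_le_real.mpr hr)).2 x

private lemma Mmat_posDef {n k : ℕ} (lam : Fin k → ℝ) (hlam : ∀ j, 0 < lam j)
    (lw : Fin n → ℝ) (hlw : ∀ i, 0 < lw i) (v : Fin n → Fin k → ℂ) (S : Finset (Fin n)) :
    (Mmat lam lw v S).PosDef := by
  unfold Mmat
  apply Matrix.PosDef.add_posSemidef
  · rw [diag_inv_eq lam hlam]
    exact Matrix.PosDef.diagonal fun j => Complex.zero_lt_real.mpr (inv_pos.mpr (hlam j))
  · refine Finset.sum_induction _ _ (fun a b ha hb => ha.add hb) Matrix.PosSemidef.zero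
      fun i _ => ?_
    have : ((lw i : ℂ))⁻¹ = (((lw i)⁻¹ : ℝ) : ℂ) := by push_cast; rfl
    rw [this]
    exact posSemidef_real_smul (posSemidef_vecMulVec_star _) (inv_nonneg.mpr (hlw i).le)

private lemma trace_vecMulVec_mul {k : ℕ} (a b : Fin k → ℂ) (C : Matrix (Fin k) (Fin k) ℂ) :
    (Matrix.vecMulVec a b * C).trace = b ⬝ᵥ (C *ᵥ a) := by
  simp only [Matrix.trace, Matrix.diag, Matrix.mul_apply, Matrix.vecMulVec_apply,
    dotProduct, Matrix.mulVec, Finset.mul_sum]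
  rw [Finset.sum_comm]
  refine Finset.sum_congr rfl fun i _ => Finset.sum_congr rfl fun j _ => by ring

-- trace cycling: tr (H * V * Mi * Vᴴ * Hᴴ) = tr (Mi * (Vᴴ * Hᴴ * H * V))
private lemma trace_cycle5 {n k m : ℕ} (H : Matrix (Fin m) (Fin n) ℂ)
    (V : Matrix (Fin n) (Fin k) ℂ) (Mi : Matrix (Fin k) (Fin k) ℂ) :
    (H * V * Mi * Vᴴ * Hᴴ).trace = (Mi * (Vᴴ * Hᴴ * H * V)).trace := by
  rw [show H * V * Mi * Vᴴ * Hᴴ = H * (V * Mi * Vᴴ * Hᴴ) by simp only [Matrix.mul_assoc],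
    Matrix.trace_mul_comm H,
    show V * Mi * Vᴴ * Hᴴ * H = V * (Mi * Vᴴ * Hᴴ * H) by simp only [Matrix.mul_assoc],
    Matrix.trace_mul_comm V,
    show Mi * Vᴴ * Hᴴ * H * V = Mi * (Vᴴ * Hᴴ * H * V) by simp only [Matrix.mul_assoc]]

/-- Sample-budget bound via structural SNRs: if `W = V_Kᴴ Hᴴ H V_K` is
positive definite and `η > 0`, then every `S` with `MSE(S) ≤ η` satisfies
`L_{|S|} ≥ (k² - η · trace(Λ⁻¹ W⁻¹)) / η`, where `L_t` is the maximum of `∑_{j∈X} ℓ_j`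
over subsets `X` of cardinality `t` and `ℓ_i = λ_{w,i}⁻¹ v_iᴴ W⁻¹ v_i`. -/
theorem sampling_budget_bound_structural_SNR
    (n k m : ℕ)
    (v : Fin n → Fin k → ℂ)
    (H : Matrix (Fin m) (Fin n) ℂ)
    (lam : Fin k → ℝ) (hlam : ∀ j, 0 < lam j)
    (lw : Fin n → ℝ) (hlw : ∀ i, 0 < lw i)
    (W : Matrix (Fin k) (Fin k) ℂ)
    (hWdef : W = (VKmat v)ᴴ * Hᴴ * H * VKmat v)
    (hW : W.PosDef)
    (ell : Fin n → ℝ)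
    (hell : ∀ i, ell i = (lw i)⁻¹ * (star (v i) ⬝ᵥ (W⁻¹ *ᵥ v i)).re)
    (η : ℝ) (hη : 0 < η)
    (S : Finset (Fin n))
    (hMSE : MSE lam lw v H S ≤ η)
    (Lt : ℝ)
    (hLt : IsGreatest
      ((fun X : Finset (Fin n) => ∑ j ∈ X, ell j) '' {X : Finset (Fin n) | X.card = S.card})
      Lt) :
    ((k : ℝ) ^ 2 -
        η * (((Matrix.diagonal fun j => (lam j : ℂ))⁻¹ * W⁻¹).trace).re) / η
      ≤ Lt := by
  classical
  have hM : (Mmat lam lw v S).PosDef := Mmat_posDef lam hlam lw hlw v S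
  have ha : MSE lam lw v H S = (((Mmat lam lw v S)⁻¹ * W).trace).re := by
    unfold MSE Kstar
    rw [trace_cycle5, ← hWdef]
  have hbid : (((Mmat lam lw v S) * W⁻¹).trace).re
      = (((Matrix.diagonal fun j => (lam j : ℂ))⁻¹ * W⁻¹).trace).re + ∑ i ∈ S, ell i := by
    have hsplit : (Mmat lam lw v S) * W⁻¹
        = (Matrix.diagonal fun j => (lam j : ℂ))⁻¹ * W⁻¹
          + ∑ i ∈ S, ((lw i : ℂ))⁻¹ • (Matrix.vecMulVec (v i) (star (v i)) * W⁻¹) := by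
      unfold Mmat
      rw [Matrix.add_mul, Finset.sum_mul]
      congr 1
      exact Finset.sum_congr rfl fun i _ => Matrix.smul_mul _ _ _
    rw [hsplit, Matrix.trace_add, Matrix.trace_sum, Complex.add_re, Complex.re_sum]
    congr 1
    refine Finset.sum_congr rfl fun i _ => ?_
    rw [Matrix.trace_smul, trace_vecMulVec_mul, hell i]
    have hc : ((lw i : ℂ))⁻¹ = (((lw i)⁻¹ : ℝ) : ℂ) := by push_cast; rfl
    rw [hc, smul_eq_mul, Complex.re_ofReal_mul]
  obtain ⟨hkey, hb0⟩ := key_ineq hM hW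
  have hA : (((Mmat lam lw v S)⁻¹ * W).trace).re ≤ η := ha ▸ hMSE
  have hSle : ∑ j ∈ S, ell j ≤ Lt := hLt.2 ⟨S, rfl, rfl⟩
  have hstep : (((Mmat lam lw v S)⁻¹ * W).trace).re * (((Mmat lam lw v S) * W⁻¹).trace).re
      ≤ η * (((Mmat lam lw v S) * W⁻¹).trace).re :=
    mul_le_mul_of_nonneg_right hA hb0
  rw [div_le_iff₀ hη]
  have hLb : η * (∑ j ∈ S, ell j) ≤ η * Lt := mul_le_mul_of_nonneg_left hSle hη.le
  nlinarith [hkey, hstep, hbid, hLb]
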